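/- As n → ∞ along the positive integers, e^{−n} · ∑_{m=0}^{n−1} n^m/m! converges to 1/2. -/

import Mathlib

open Real Set

lemma mono_from_deriv {f f' : ℝ → ℝ}
    (hder : ∀ x, 0 ≤ x → HasDerivAt f (f' x) x) (h0 : ∀ x, 0 ≤ x → 0 ≤ f' x) :
    ∀ u, 0 ≤ u → f 0 ≤ f u := by
  intro u hu
  have hmono : MonotoneOn f (Ici 0) := by
    apply monotoneOn_of_deriv_nonneg (convex_Ici 0)
    · exact fun x hx => (hder x hx).continuousAt.continuousWithinAt
    · intro x hx
      rw [interior_Ici] at hx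
      exact (hder x (le_of_lt hx)).differentiableAt.differentiableWithinAt
    · intro x hx
      rw [interior_Ici] at hx
      rw [(hder x hx.le).deriv]
      exact h0 x hx.le
  exact hmono self_mem_Ici hu hu

lemma log_ge_quad {u : ℝ} (hu : 0 ≤ u) : u - u^2/2 ≤ Real.log (1+u) := by
  have := mono_from_deriv (f := fun x => Real.log (1+x) - (x - x^2/2))
    (f' := fun x => x^2/(1+x)) (fun x hx => by
      have h1 : (0:ℝ) < 1 + x := by linarith
      have : HasDerivAt (fun x : ℝ => Real.log (1+x)) (1/(1+x)) x := by
        simpa using ((hasDerivAt_id x).const_add 1).log h1.ne'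
      refine (this.fun_sub ((hasDerivAt_id' x).fun_sub ((hasDerivAt_pow 2 x).div_const 2))).congr_deriv ?_
      field_simp
      ring)
    (fun x hx => by positivity)
  have h := this u hu
  simp at h
  linarith

lemma log_le_quad {u : ℝ} (hu : 0 ≤ u) : Real.log (1+u) ≤ u - u^2/(2*(1+u)) := by
  have := mono_from_deriv (f := fun x => (x - x^2/(2*(1+x))) - Real.log (1+x))
    (f' := fun x => x^2/(2*(1+x)^2)) (fun x hx => by
      have h1 : (0:ℝ) < 1 + x := by linarith
      have hlog : HasDerivAt (fun x : ℝ => Real.log (1+x)) (1/(1+x)) x := by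
        simpa using ((hasDerivAt_id x).const_add 1).log h1.ne'
      have hq : HasDerivAt (fun x : ℝ => x^2/(2*(1+x))) ((2*x*(2*(1+x)) - x^2*2)/(2*(1+x))^2) x := by
        apply HasDerivAt.div
        · simpa using hasDerivAt_pow 2 x
        · simpa using ((hasDerivAt_id x).const_add 1).const_mul 2
        · positivity
      refine (((hasDerivAt_id' x).fun_sub hq).fun_sub hlog).congr_deriv ?_
      field_simp
      ring)
    (fun x hx => by positivity)
  have h := this u hu
  simp at h
  linarith
open Real

lemma sum_deriv_telescope (k : ℕ) (t : ℝ) :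
    HasDerivAt (fun t : ℝ => -(Real.exp (-t) * ∑ m ∈ Finset.range (k+1), t^m / m.factorial))
      (t^k / k.factorial * Real.exp (-t)) t := by
  have hS : HasDerivAt (fun t : ℝ => ∑ m ∈ Finset.range (k+1), t^m / m.factorial)
      (∑ m ∈ Finset.range k, t^m / m.factorial) t := by
    have : HasDerivAt (fun t : ℝ => ∑ m ∈ Finset.range (k+1), t^m / m.factorial)
        (∑ m ∈ Finset.range (k+1), (m : ℝ) * t^(m-1) / m.factorial) t := by
      apply HasDerivAt.fun_sum
      intro m _
      exact (hasDerivAt_pow m t).div_const _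
    convert this using 1
    rw [Finset.sum_range_succ' (fun m => (m:ℝ) * t^(m-1) / m.factorial)]
    simp only [Nat.cast_zero, zero_mul, Nat.factorial_zero, Nat.cast_one, zero_div, add_zero]
    apply Finset.sum_congr rfl
    intro i _
    rw [Nat.factorial_succ]
    push_cast
    have : (i:ℝ) + 1 ≠ 0 := by positivity
    field_simp
  have hE : HasDerivAt (fun t : ℝ => Real.exp (-t)) (-Real.exp (-t)) t := by
    simpa using (hasDerivAt_neg t).exp
  have := (hE.fun_mul hS).fun_neg
  refine this.congr_deriv ?_
  rw [Finset.sum_range_succ]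
  field_simp
  ring

lemma integral_pow_exp_neg (k : ℕ) (X : ℝ) :
    ∫ t in (0:ℝ)..X, t^k / k.factorial * Real.exp (-t)
      = 1 - Real.exp (-X) * ∑ m ∈ Finset.range (k+1), X^m / m.factorial := by
  have h := intervalIntegral.integral_eq_sub_of_hasDerivAt (a := (0:ℝ)) (b := X)
    (f := fun t : ℝ => -(Real.exp (-t) * ∑ m ∈ Finset.range (k+1), t^m / m.factorial))
    (fun t _ => sum_deriv_telescope k t)
    (by
      apply Continuous.intervalIntegrable
      continuity)
  rw [h]
  simp [Finset.sum_range_succ']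
  ring
open Real Set MeasureTheory


lemma integrableOn_pow_exp (k : ℕ) : IntegrableOn (fun t : ℝ => t^k / k.factorial * Real.exp (-t)) (Ioi 0) := by
  have h : IntegrableOn (fun t : ℝ => Real.exp (-t) * t ^ ((k+1:ℝ) - 1)) (Ioi 0) :=
    Real.GammaIntegral_convergent (by positivity)
  apply IntegrableOn.congr_fun (h.const_mul ((k.factorial : ℝ))⁻¹) ?_ measurableSet_Ioi
  intro t ht
  have e : ((k:ℝ)+1) - 1 = (k:ℝ) := by ring
  simp only [e, Real.rpow_natCast]
  field_simp

lemma integral_Ioi_pow_exp (k : ℕ) :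
    ∫ t in Ioi (0:ℝ), t^k / k.factorial * Real.exp (-t) = 1 := by
  have h := Real.Gamma_eq_integral (s := (k:ℝ)+1) (by positivity)
  rw [Real.Gamma_nat_eq_factorial] at h
  have h2 : ∫ t in Ioi (0:ℝ), t^k / k.factorial * Real.exp (-t)
      = (k.factorial : ℝ)⁻¹ * ∫ x in Ioi (0:ℝ), Real.exp (-x) * x ^ ((k:ℝ) + 1 - 1) := by
    rw [← integral_const_mul]
    apply setIntegral_congr_fun measurableSet_Ioi
    intro t ht
    have e : ((k:ℝ)) + 1 - 1 = (k:ℝ) := by ring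
    simp only [e, Real.rpow_natCast]
    field_simp
  rw [h2, ← h]
  field_simp [Nat.factorial_ne_zero]

lemma split_Ioi (k : ℕ) (X : ℝ) (hX : 0 ≤ X) :
    ∫ t in Ioi X, t^k / k.factorial * Real.exp (-t)
      = 1 - ∫ t in (0:ℝ)..X, t^k / k.factorial * Real.exp (-t) := by
  have hint := integrableOn_pow_exp k
  have hu : Ioc (0:ℝ) X ∪ Ioi X = Ioi 0 := Ioc_union_Ioi_eq_Ioi hX
  have hs : ∫ t in Ioi (0:ℝ), t^k / k.factorial * Real.exp (-t)
      = (∫ t in Ioc (0:ℝ) X, t^k / k.factorial * Real.exp (-t))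
        + ∫ t in Ioi X, t^k / k.factorial * Real.exp (-t) := by
    rw [← hu]
    apply setIntegral_union (Ioc_disjoint_Ioi le_rfl) measurableSet_Ioi
    · exact hint.mono_set (by rw [← hu]; exact subset_union_left)
    · exact hint.mono_set (by rw [← hu]; exact subset_union_right)
  rw [intervalIntegral.integral_of_le hX]
  rw [integral_Ioi_pow_exp k] at hs
  linarith
open Real Set MeasureTheory

lemma integral_comp_add_right_Ioi' (g : ℝ → ℝ) (a d : ℝ) :
    ∫ x in Ioi a, g (x + d) = ∫ x in Ioi (a + d), g x := by
  rw [← integral_indicator measurableSet_Ioi, ← integral_indicator measurableSet_Ioi,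
    ← integral_add_right_eq_self (Set.indicator (Ioi (a+d)) g) d]
  congr 1
  ext x
  rw [show (Set.indicator (Ioi (a+d)) g) (x + d) = Set.indicator ((fun y : ℝ => y + d) ⁻¹' (Ioi (a+d))) (fun y => g (y + d)) x from rfl]
  congr 1
  simp [preimage_add_const_Ioi]

lemma subst_Ioi (k : ℕ) :
    let N : ℝ := (k:ℝ) + 1
    ∫ t in Ioi N, t^k / k.factorial * Real.exp (-t)
      = Real.sqrt N * ∫ s in Ioi (0:ℝ),
          ((N:ℝ)^k * Real.exp (-N) / k.factorial) *
            ((1 + s / Real.sqrt N)^k * Real.exp (-(Real.sqrt N * s))) := by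
  intro N
  have hN : (0:ℝ) < N := by positivity
  have hsN : (0:ℝ) < Real.sqrt N := Real.sqrt_pos.mpr hN
  set g : ℝ → ℝ := fun t => t^k / k.factorial * Real.exp (-t) with hg
  have h1 : ∫ t in Ioi N, g t = ∫ u in Ioi (0:ℝ), g (u + N) := by
    rw [integral_comp_add_right_Ioi' g 0 N, zero_add]
  have h2 := integral_comp_mul_left_Ioi (fun x => g (x + N)) 0 hsN
  rw [mul_zero] at h2
  simp only [smul_eq_mul] at h2
  rw [h1, show (∫ (u : ℝ) in Ioi (0:ℝ), g (u + N)) = Real.sqrt N * ((Real.sqrt N)⁻¹ * ∫ (u : ℝ) in Ioi (0:ℝ), g (u + N)) by field_simp, ← h2]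
  congr 1
  apply setIntegral_congr_fun measurableSet_Ioi
  intro s hs
  simp only [hg]
  have key : Real.sqrt N * s + N = N * (1 + s / Real.sqrt N) := by
    have h3 : Real.sqrt N * Real.sqrt N = N := Real.mul_self_sqrt hN.le
    field_simp
    linear_combination s * h3
  rw [key, mul_pow]
  rw [show -(N * (1 + s / Real.sqrt N)) = -(Real.sqrt N * s) + -N by rw [← key]; ring,
    Real.exp_add]
  ring
open Real Set MeasureTheory Filter Topology

lemma sqrt_tendsto_atTop : Tendsto Real.sqrt atTop atTop := by
  apply tendsto_atTop_atTop_of_monotone (fun a b hab => Real.sqrt_le_sqrt hab)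
  intro b
  exact ⟨b^2, by rw [Real.sqrt_sq_eq_abs]; exact le_abs_self b⟩

lemma sqrtN_tendsto : Tendsto (fun k : ℕ => Real.sqrt ((k:ℝ)+1)) atTop atTop :=
  sqrt_tendsto_atTop.comp
    (tendsto_atTop_add_const_right atTop 1 tendsto_natCast_atTop_atTop)

lemma stirling_part :
    Tendsto (fun k : ℕ => Real.sqrt ((k:ℝ)+1) * ((k:ℝ)+1)^k * Real.exp (-((k:ℝ)+1)) / (k.factorial : ℝ))
      atTop (𝓝 ((Real.sqrt 2 * Real.sqrt π)⁻¹)) := by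
  have hs : Tendsto (fun k : ℕ => Stirling.stirlingSeq (k+1)) atTop (𝓝 (Real.sqrt π)) :=
    Stirling.tendsto_stirlingSeq_sqrt_pi.comp (tendsto_add_atTop_nat 1)
  have hne : Real.sqrt 2 * Real.sqrt π ≠ 0 := by positivity
  have h := ((tendsto_const_nhds.mul hs).inv₀ hne)
  apply h.congr
  intro k
  have hN : (0:ℝ) < (k:ℝ)+1 := by positivity
  rw [Stirling.stirlingSeq]
  have hfac : ((k+1).factorial : ℝ) = ((k:ℝ)+1) * k.factorial := by
    rw [Nat.factorial_succ]; push_cast; ring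
  have hsqrt : Real.sqrt (2 * ((k:ℕ)+1 : ℕ)) = Real.sqrt 2 * Real.sqrt ((k:ℝ)+1) := by
    rw [← Real.sqrt_mul (by norm_num : (0:ℝ) ≤ 2)]
    norm_num
  have hexp : (((k:ℝ)+1) / Real.exp 1)^(k+1) = ((k:ℝ)+1)^(k+1) * Real.exp (-(((k:ℝ))+1)) := by
    rw [div_pow, Real.exp_one_pow, Real.exp_neg, div_eq_mul_inv]
    push_cast
    ring
  simp only [Nat.cast_add, Nat.cast_one] at *
  rw [hexp, hsqrt, hfac, pow_succ]
  have h1 : Real.sqrt ((k:ℝ)+1) ≠ 0 := by positivity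
  have h2 : ((k:ℝ)+1) ≠ 0 := by positivity
  have h3 : (k.factorial : ℝ) ≠ 0 := Nat.cast_ne_zero.mpr k.factorial_ne_zero
  have h4 : Real.exp (-((k:ℝ)+1)) ≠ 0 := Real.exp_ne_zero _
  field_simp
open MeasureTheory Filter Topology

lemma F_le_bound {k : ℕ} {s : ℝ} (hs : 0 < s) :
    (1 + s / Real.sqrt ((k:ℝ)+1))^k * Real.exp (-(Real.sqrt ((k:ℝ)+1) * s))
      ≤ Real.exp (1/2 - s/2) := by
  set N : ℝ := (k:ℝ)+1 with hNdef
  have hN : (0:ℝ) < N := by positivity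
  set r : ℝ := Real.sqrt N with hrdef
  have hr0 : 0 < r := Real.sqrt_pos.mpr hN
  have hrr : r * r = N := Real.mul_self_sqrt hN.le
  have hN1 : (1:ℝ) ≤ N := by rw [hNdef]; have := Nat.cast_nonneg (α := ℝ) k; linarith
  have hr1 : 1 ≤ r := by nlinarith
  set u : ℝ := s / r with hudef
  have hu : 0 < u := by positivity
  have h1u : (0:ℝ) < 1 + u := by linarith
  have hru : r * u = s := by rw [hudef]; field_simp
  have hus : u ≤ s := by
    rw [hudef, div_le_iff₀ hr0]
    nlinarith
  have hpow : (1 + u)^k = Real.exp (k * Real.log (1+u)) := by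
    rw [Real.exp_nat_mul, Real.exp_log h1u]
  rw [hpow, ← Real.exp_add, Real.exp_le_exp]
  have hlog_nn : 0 ≤ Real.log (1+u) := Real.log_nonneg (by linarith)
  have hlog_le := log_le_quad hu.le
  have hkN : (k:ℝ) ≤ N := by rw [hNdef]; linarith
  have step1 : (k:ℝ) * Real.log (1+u) ≤ N * Real.log (1+u) :=
    mul_le_mul_of_nonneg_right hkN hlog_nn
  have hNu2 : N * u^2 = s^2 := by
    rw [hudef, div_pow, sq r, hrr]; field_simp
  have step2 : N * Real.log (1+u) ≤ N * u - s^2/(2*(1+u)) := by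
    have h5 := mul_le_mul_of_nonneg_left hlog_le hN.le
    have h6 : N * (u - u^2/(2*(1+u))) = N*u - (N*u^2)/(2*(1+u)) := by ring
    rw [hNu2] at h6
    linarith
  have hNu : N * u = r * s := by rw [← hrr, mul_assoc, hru]
  have step3 : -(s^2/(2*(1+u))) ≤ 1/2 - s/2 := by
    have h2 : s/2 - 1/2 ≤ s^2/(2*(1+u)) := by
      rw [div_sub_div _ _ (two_ne_zero) (two_ne_zero), div_le_div_iff₀ (by norm_num) (by positivity)]
      nlinarith [mul_nonneg (sub_nonneg.mpr hus) hu.le, sq_nonneg (s-1), mul_pos hs hu]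
    linarith
  have hfin := step1.trans step2
  rw [hNu] at hfin
  linarith

lemma F_tendsto {s : ℝ} (hs : 0 < s) :
    Tendsto (fun k : ℕ => (1 + s / Real.sqrt ((k:ℝ)+1))^k
        * Real.exp (-(Real.sqrt ((k:ℝ)+1) * s))) atTop (𝓝 (Real.exp (-(s^2/2)))) := by
  have hu : Tendsto (fun k : ℕ => s / Real.sqrt ((k:ℝ)+1)) atTop (𝓝 0) := by
    simpa [div_eq_mul_inv] using Tendsto.const_mul s sqrtN_tendsto.inv_tendsto_atTop
  -- E k = k * log (1 + u k) - sqrt (k+1) * s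
  have hE : Tendsto (fun k : ℕ => (k:ℝ) * Real.log (1 + s / Real.sqrt ((k:ℝ)+1))
      - Real.sqrt ((k:ℝ)+1) * s) atTop (𝓝 (-(s^2/2))) := by
    apply tendsto_of_tendsto_of_tendsto_of_le_of_le
      (g := fun k : ℕ => -(s / Real.sqrt ((k:ℝ)+1)) - s^2/2 + (s / Real.sqrt ((k:ℝ)+1))^2/2
        - Real.log (1 + s / Real.sqrt ((k:ℝ)+1)) * 0)
      (h := fun k : ℕ => -(s^2/(2*(1 + s / Real.sqrt ((k:ℝ)+1)))))
    · -- lower tendsto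
      have h1 : Tendsto (fun k : ℕ => -(s / Real.sqrt ((k:ℝ)+1)) - s^2/2
          + (s / Real.sqrt ((k:ℝ)+1))^2/2 - Real.log (1 + s / Real.sqrt ((k:ℝ)+1)) * 0)
          atTop (𝓝 (-0 - s^2/2 + 0^2/2 - Real.log (1+0) * 0)) := by
        apply Tendsto.sub
        apply Tendsto.add
        apply Tendsto.sub (hu.neg) tendsto_const_nhds
        exact ((hu.pow 2).div_const 2)
        exact (((tendsto_const_nhds.add hu).log (by norm_num)).mul tendsto_const_nhds)
      simpa using h1
    · have h2 : Tendsto (fun k : ℕ => -(s^2/(2*(1 + s / Real.sqrt ((k:ℝ)+1)))))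
          atTop (𝓝 (-(s^2/(2*(1 + 0))))) := by
        apply Tendsto.neg
        apply Tendsto.div tendsto_const_nhds
        · exact (tendsto_const_nhds.mul (tendsto_const_nhds.add hu))
        · norm_num
      simpa using h2
    · -- lower bound ≤ E
      intro k
      dsimp only
      set N : ℝ := (k:ℝ)+1 with hNdef
      have hN : (0:ℝ) < N := by positivity
      set r : ℝ := Real.sqrt N with hrdef
      have hr0 : 0 < r := Real.sqrt_pos.mpr hN
      have hrr : r * r = N := Real.mul_self_sqrt hN.le
      set u : ℝ := s / r with hudef
      have hu0 : 0 < u := by positivity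
      have hru : r * u = s := by rw [hudef]; field_simp
      have hlog_ge := log_ge_quad hu0.le
      have hNu2 : N * u^2 = s^2 := by
        rw [hudef, div_pow, sq r, hrr]; field_simp
      have hmain : (k:ℝ) * Real.log (1+u) ≥ (k:ℝ) * (u - u^2/2) :=
        mul_le_mul_of_nonneg_left hlog_ge (by positivity)
      have hkN : (k:ℝ) = N - 1 := by rw [hNdef]; ring
      have hNu : N * u = r * s := by rw [← hrr, mul_assoc, hru]
      have expand : (k:ℝ)*(u - u^2/2) = N*u - u - (N*u^2)/2 + u^2/2 := by
        rw [hkN]; ring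
      rw [mul_zero, sub_zero]
      rw [hNu2, hNu] at expand
      linarith
    · -- E ≤ upper bound
      intro k
      dsimp only
      set N : ℝ := (k:ℝ)+1 with hNdef
      have hN : (0:ℝ) < N := by positivity
      set r : ℝ := Real.sqrt N with hrdef
      have hr0 : 0 < r := Real.sqrt_pos.mpr hN
      have hrr : r * r = N := Real.mul_self_sqrt hN.le
      set u : ℝ := s / r with hudef
      have hu0 : 0 < u := by positivity
      have h1u : (0:ℝ) < 1 + u := by linarith
      have hru : r * u = s := by rw [hudef]; field_simp
      have hlog_le := log_le_quad hu0.le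
      have hlog_nn : 0 ≤ Real.log (1+u) := Real.log_nonneg (by linarith)
      have hkN : (k:ℝ) ≤ N := by rw [hNdef]; linarith
      have step1 : (k:ℝ) * Real.log (1+u) ≤ N * Real.log (1+u) :=
        mul_le_mul_of_nonneg_right hkN hlog_nn
      have hNu2 : N * u^2 = s^2 := by
        rw [hudef, div_pow, sq r, hrr]; field_simp
      have step2 : N * Real.log (1+u) ≤ N * u - s^2/(2*(1+u)) := by
        have h5 := mul_le_mul_of_nonneg_left hlog_le hN.le
        have h6 : N * (u - u^2/(2*(1+u))) = N*u - (N*u^2)/(2*(1+u)) := by ring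
        rw [hNu2] at h6
        linarith
      have hNu : N * u = r * s := by rw [← hrr, mul_assoc, hru]
      have hfin := step1.trans step2
      rw [hNu] at hfin
      linarith
  have hcont := (Real.continuous_exp.tendsto (-(s^2/2))).comp hE
  apply hcont.congr
  intro k
  simp only [Function.comp]
  have hN : (0:ℝ) < (k:ℝ)+1 := by positivity
  have h1u : (0:ℝ) < 1 + s / Real.sqrt ((k:ℝ)+1) := by positivity
  rw [show (1 + s / Real.sqrt ((k:ℝ)+1))^k
      = Real.exp ((k:ℝ) * Real.log (1 + s / Real.sqrt ((k:ℝ)+1))) by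
    rw [Real.exp_nat_mul, Real.exp_log h1u]]
  rw [← Real.exp_add, sub_eq_add_neg]

lemma J_tendsto :
    Tendsto (fun k : ℕ => ∫ s in Ioi (0:ℝ),
        (1 + s / Real.sqrt ((k:ℝ)+1))^k * Real.exp (-(Real.sqrt ((k:ℝ)+1) * s)))
      atTop (𝓝 (Real.sqrt (π / (1/2)) / 2)) := by
  rw [← integral_gaussian_Ioi (1/2)]
  apply MeasureTheory.tendsto_integral_of_dominated_convergence
    (bound := fun s => Real.exp (1/2 - s/2))
  · intro k
    apply Continuous.aestronglyMeasurable
    continuity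
  · have hIb : IntegrableOn (fun s : ℝ => Real.exp (1/2) * Real.exp (-(1/2) * s)) (Ioi 0) :=
      (exp_neg_integrableOn_Ioi 0 (by norm_num : (0:ℝ) < 1/2)).const_mul _
    apply IntegrableOn.congr_fun hIb ?_ measurableSet_Ioi
    intro s _
    show Real.exp (1/2) * Real.exp (-(1/2)*s) = Real.exp (1/2 - s/2)
    rw [← Real.exp_add]
    congr 1
    ring
  · intro k
    filter_upwards [ae_restrict_mem measurableSet_Ioi] with s hs
    have h1u : (0:ℝ) ≤ s / Real.sqrt ((k:ℝ)+1) :=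
      div_nonneg (le_of_lt hs) (Real.sqrt_nonneg _)
    rw [Real.norm_eq_abs, abs_of_nonneg
      (mul_nonneg (pow_nonneg (by linarith) _) (Real.exp_pos _).le)]
    exact F_le_bound hs
  · filter_upwards [ae_restrict_mem measurableSet_Ioi] with s hs
    have h := F_tendsto hs
    rw [show -(1/2)*s^2 = -(s^2/2) by ring]
    exact h

theorem exp_partial_sum_below_n :
    Tendsto (fun n : ℕ =>
        Real.exp (-(n : ℝ)) * ∑ m ∈ Finset.range n, (n : ℝ) ^ m / m.factorial)
      atTop (nhds (1 / 2)) := by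
  rw [← Filter.tendsto_add_atTop_iff_nat 1]
  have key : ∀ k : ℕ,
      Real.exp (-((k+1 : ℕ) : ℝ)) * ∑ m ∈ Finset.range (k+1), ((k+1:ℕ):ℝ)^m / m.factorial
        = (Real.sqrt ((k:ℝ)+1) * ((k:ℝ)+1)^k * Real.exp (-((k:ℝ)+1)) / k.factorial)
          * ∫ s in Ioi (0:ℝ),
              (1 + s / Real.sqrt ((k:ℝ)+1))^k * Real.exp (-(Real.sqrt ((k:ℝ)+1)*s)) := by
    intro k
    have hcast : ((k+1:ℕ):ℝ) = (k:ℝ)+1 := by push_cast; ring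
    rw [hcast]
    have h1 := integral_pow_exp_neg k ((k:ℝ)+1)
    have h2 := split_Ioi k ((k:ℝ)+1) (by positivity)
    have h3 := subst_Ioi k
    simp only at h3
    rw [h1] at h2
    have h4 : Real.exp (-((k:ℝ)+1)) * ∑ m ∈ Finset.range (k+1), ((k:ℝ)+1)^m / m.factorial
        = ∫ t in Ioi ((k:ℝ)+1), t^k / k.factorial * Real.exp (-t) := by
      rw [h2]; ring
    rw [h4, h3, ← MeasureTheory.integral_const_mul]
    rw [← MeasureTheory.integral_const_mul]
    apply MeasureTheory.setIntegral_congr_fun measurableSet_Ioi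
    intro s _
    ring
  have hval : (Real.sqrt 2 * Real.sqrt π)⁻¹ * (Real.sqrt (π/(1/2))/2) = 1/2 := by
    rw [show π/(1/2) = 2*π by ring, Real.sqrt_mul (by norm_num : (0:ℝ) ≤ 2) π]
    have h2 : (0:ℝ) < Real.sqrt 2 := by positivity
    have hπ : (0:ℝ) < Real.sqrt π := Real.sqrt_pos.mpr Real.pi_pos
    field_simp
  have H := stirling_part.mul J_tendsto
  rw [hval] at H
  apply H.congr
  intro k
  rw [← key k]
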